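/- Let C be a triangulated category and T a contravariantly finite rigid full subcategory closed under direct summands. Suppose f : X → Y satisfies: (i) its cone factors through Σ(T^⊥), and (ii) f is a weak equivalence (both connecting morphisms in its triangle factor through T^⊥). Then for every commutative square with left vertical arrow a : T' → B (T' in T, B in T * ΣT) and right vertical arrow f, there exists a diagonal lift making both triangles commute on the nose. -/

import Mathlib

open CategoryTheory CategoryTheory.Limits CategoryTheory.Pretriangulated

variable {C : Type*} [Category C] [Preadditive C] [HasZeroObject C]
  [HasShift C ℤ] [∀ n : ℤ, Functor.Additive (CategoryTheory.shiftFunctor C n)]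
  [Pretriangulated C]

/-- `f` factors through an object of the set `S`. -/
def FactorsThruSet (S : Set C) {X Y : C} (f : X ⟶ Y) : Prop :=
  ∃ U ∈ S, ∃ (a : X ⟶ U) (b : U ⟶ Y), f = a ≫ b

/-- The right perpendicular subcategory `T^⊥` of a full subcategory `T`. -/
def rperp (T : Set C) : Set C := {Z | ∀ T' ∈ T, ∀ (f : T' ⟶ Z), f = 0}

/-- The class `W` of morphisms whose connecting morphisms in any triangle factor
through `T^⊥`. -/
def Wclass (T : Set C) {X Y : C} (f : X ⟶ Y) : Prop :=
  ∀ (Z : C) (r : Z ⟶ X) (s : Y ⟶ Z⟦(1:ℤ)⟧),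
    (Triangle.mk r f s ∈ distTriang C) →
      FactorsThruSet (rperp T) r ∧ FactorsThruSet (rperp T) s

/-- A subcategory `T` is rigid if `C(T, ΣT) = 0`. -/
def IsRigid (T : Set C) : Prop :=
  ∀ T' ∈ T, ∀ T'' ∈ T, ∀ (f : T' ⟶ (T'' : C)⟦(1:ℤ)⟧), f = 0

/-- A subcategory is contravariantly finite if every object admits a right approximation. -/
def ContravariantlyFinite (T : Set C) : Prop :=
  ∀ X : C, ∃ T₀ ∈ T, ∃ (p : T₀ ⟶ X), ∀ T' ∈ T, ∀ (u : T' ⟶ X), ∃ v : T' ⟶ T₀, v ≫ p = u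

/-- The subcategory `T * ΣT` of cones of morphisms of `T`. -/
def TstarSigmaT (T : Set C) : Set C :=
  {A | ∃ T₁ ∈ T, ∃ T₀ ∈ T, ∃ (a : T₁ ⟶ (T₀ : C)) (b : (T₀ : C) ⟶ A)
    (c : A ⟶ (T₁ : C)⟦(1:ℤ)⟧), Triangle.mk a b c ∈ distTriang C}
/-- `f` factors through the shift of an object of the set `S`. -/
def FactorsThruShiftSet (S : Set C) {X Y : C} (f : X ⟶ Y) : Prop :=
  ∃ U ∈ S, ∃ (a : X ⟶ (U⟦(1:ℤ)⟧)) (b : (U⟦(1:ℤ)⟧) ⟶ Y), f = a ≫ b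

/-- A subcategory is closed under direct summands. -/
def ClosedUnderSummands (T : Set C) : Prop :=
  ∀ (X S : C) (i : X ⟶ S) (r : S ⟶ X), i ≫ r = 𝟙 X → S ∈ T → X ∈ T

/-- If the cone of `f` factors through `Σ(T^⊥)` and `f` is a weak equivalence, then
every commutative square with left vertical arrow `a : T' ⟶ B` (`T' ∈ T`,
`B ∈ T * ΣT`) and right vertical arrow `f` admits a diagonal lift. -/
theorem trivial_fibration_rlp_I (T : Set C)
    (hcf : ContravariantlyFinite T) (hrig : IsRigid T)
    (hsumm : ClosedUnderSummands T)
    {X Y : C} (f : X ⟶ Y)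
    (hcone : ∀ (Z : C) (g : Z ⟶ X) (v : Y ⟶ Z⟦(1:ℤ)⟧),
      (Triangle.mk g f v ∈ distTriang C) → FactorsThruShiftSet (rperp T) v)
    (hweq : Wclass T f)
    {T' B : C} (hT' : T' ∈ T) (hB : B ∈ TstarSigmaT T)
    (a : T' ⟶ B) (u : T' ⟶ X) (v : B ⟶ Y) (hsq : u ≫ f = a ≫ v) :
    ∃ l : B ⟶ X, a ≫ l = u ∧ l ≫ f = v := by
  -- Complete `f` to a distinguished triangle `Z ⟶ X ⟶ Y ⟶ Z⟦1⟧`.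
  obtain ⟨Z, g, w, htri⟩ := Pretriangulated.distinguished_cocone_triangle₁ f
  -- the connecting morphisms factor through `T^⊥`
  obtain ⟨⟨W, hW, r₁, r₂, hg⟩, -⟩ := hweq Z g w htri
  obtain ⟨V, hV, s₁, s₂, hw⟩ := hweq Z g w htri |>.2
  -- the cone factors through `Σ(T^⊥)`
  obtain ⟨U, hU, p, b, hwp⟩ := hcone Z g w htri
  -- the triangle presenting `B`
  obtain ⟨T₁, hT₁, T₀, hT₀, α, β, γ, htriB⟩ := hB
  -- `β ≫ v ≫ s₁ = 0`, so `v ≫ s₁` factors through `γ`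
  have hβ : β ≫ (v ≫ s₁) = 0 := hV T₀ hT₀ _
  obtain ⟨ψ, hψ⟩ : ∃ ψ : (shiftFunctor C (1:ℤ)).obj T₁ ⟶ V, v ≫ s₁ = γ ≫ ψ :=
    Triangle.yoneda_exact₃ _ htriB (v ≫ s₁) hβ
  -- desuspend `ψ ≫ s₂ : T₁⟦1⟧ ⟶ Z⟦1⟧`
  set k : T₁ ⟶ Z := (shiftFunctor C (1:ℤ)).preimage (ψ ≫ s₂) with hk
  have hkmap : (shiftFunctor C (1:ℤ)).map k = ψ ≫ s₂ := Functor.map_preimage _ _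
  -- `k ≫ g = 0`
  have hkg : k ≫ g = 0 := by
    have h1 : k ≫ r₁ = 0 := hW T₁ hT₁ _
    rw [hg, ← Category.assoc, h1, zero_comp]
  -- so `k⟦1⟧` factors through `w`
  obtain ⟨m, hm⟩ : ∃ m : (shiftFunctor C (1:ℤ)).obj T₁ ⟶ Y, (shiftFunctor C (1:ℤ)).map k = m ≫ w :=
    Triangle.coyoneda_exact₁ _ htri ((shiftFunctor C (1:ℤ)).map k)
    (by show (shiftFunctor C (1:ℤ)).map k ≫ (shiftFunctor C (1:ℤ)).map g = 0; rw [← Functor.map_comp, hkg, Functor.map_zero])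
  -- `m ≫ p = 0` since it desuspends to a map `T₁ ⟶ U`, `U ∈ T^⊥`
  have hmp : m ≫ p = 0 := by
    have h0 : (shiftFunctor C (1:ℤ)).preimage (m ≫ p) = 0 := hU T₁ hT₁ _
    have := Functor.map_preimage (shiftFunctor C (1:ℤ)) (m ≫ p)
    rw [h0, Functor.map_zero] at this
    exact this.symm
  -- hence `v ≫ w = 0`
  have hvw : v ≫ w = 0 := by
    have : v ≫ w = γ ≫ (shiftFunctor C (1:ℤ)).map k := by
      rw [hkmap, hw, ← Category.assoc, hψ, Category.assoc]
    rw [this, hm, hwp, ← Category.assoc m, hmp]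
    simp
  -- so `v` lifts through `f`
  obtain ⟨l, hl⟩ : ∃ l : B ⟶ X, v = l ≫ f := Triangle.coyoneda_exact₃ _ htri v hvw
  refine ⟨l, ?_, hl.symm⟩
  -- `u - a ≫ l` kills `f`, hence factors through `Z`, hence is `0`
  have hd : (u - a ≫ l) ≫ f = 0 := by
    rw [Preadditive.sub_comp, hsq, Category.assoc, ← hl, sub_self]
  obtain ⟨e, he⟩ : ∃ e : T' ⟶ Z, u - a ≫ l = e ≫ g :=
    Triangle.coyoneda_exact₂ _ htri (u - a ≫ l) hd
  have her : e ≫ r₁ = 0 := hW T' hT' _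
  have h0 : u - a ≫ l = 0 := by
    rw [he, hg, ← Category.assoc, her, zero_comp]
  rw [sub_eq_zero] at h0
  exact h0.symm
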